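/- Let s_1 ≠ s_2 ∈ S with priors p_1 > p_2 > 0, p_1 + p_2 = 1, and suppose s* := (p_1 s_1 − p_2 s_2)/(p_1 − p_2) lies in S̃ = cl(S). Then for every two-valued observable (1−e, e), the success probability satisfies P_succ(O) = p_1(1−e(s_1)) + p_2 e(s_2) ≤ p_1; i.e., the case is non-generic (P_succ = max(p_1,p_2)). -/

import Mathlib

/-- An affine functional on a convex subset `A` of a real vector space. -/
def IsAffineOn {E : Type*} [AddCommGroup E] [Module ℝ E] (A : Set E) (f : E → ℝ) : Prop :=
  ∀ x ∈ A, ∀ y ∈ A, ∀ l : ℝ, 0 ≤ l → l ≤ 1 →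
    f (l • x + (1 - l) • y) = l * f x + (1 - l) * f y

/-- A virtual effect: a continuous affine functional on `A` with values in `[0,1]`. -/
def IsVirtualEffect {E : Type*} [AddCommGroup E] [Module ℝ E] [TopologicalSpace E]
    (A : Set E) (f : E → ℝ) : Prop :=
  ContinuousOn f A ∧ IsAffineOn A f ∧ ∀ x ∈ A, f x ∈ Set.Icc (0 : ℝ) 1

/-- An `N`-valued observable on `A`: a tuple of effects summing to `1` on `A`. -/
def IsObservableOn {E : Type*} [AddCommGroup E] [Module ℝ E] (A : Set E) {N : ℕ}
    (e : Fin N → E → ℝ) : Prop :=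
  (∀ i, IsAffineOn A (e i) ∧ ∀ x ∈ A, e i x ∈ Set.Icc (0 : ℝ) 1) ∧
    ∀ x ∈ A, (∑ i, e i x) = 1

open Finset in
lemma affine_comb {E : Type*} [AddCommGroup E] [Module ℝ E] {S : Set E} (hS : Convex ℝ S)
    {e : E → ℝ} (he : IsAffineOn S e) {ι : Type*} (t : Finset ι) :
    ∀ (w : ι → ℝ) (z : ι → E), (∀ i ∈ t, 0 ≤ w i) → (∑ i ∈ t, w i) = 1 →
      (∀ i ∈ t, z i ∈ S) →
      (∑ i ∈ t, w i • z i) ∈ S ∧ e (∑ i ∈ t, w i • z i) = ∑ i ∈ t, w i * e (z i) := by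
  classical
  induction t using Finset.induction_on with
  | empty => intro w z _ h1 _; simp at h1
  | @insert a t ha ih =>
    intro w z hw h1 hz
    have hza : z a ∈ S := hz a (mem_insert_self a t)
    have hwa : 0 ≤ w a := hw a (mem_insert_self a t)
    have hWnn : 0 ≤ ∑ i ∈ t, w i :=
      Finset.sum_nonneg fun i hi => hw i (mem_insert_of_mem hi)
    have hW : ∑ i ∈ t, w i = 1 - w a := by
      rw [Finset.sum_insert ha] at h1; linarith
    have hwa1 : w a ≤ 1 := by linarith [hWnn.trans_eq hW]
    rcases eq_or_lt_of_le hWnn with h0 | h0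
    · -- tail has total weight 0, so all weights are 0
      have hz0 : ∀ i ∈ t, w i = 0 := by
        intro i hi
        exact (Finset.sum_eq_zero_iff_of_nonneg
          (fun j hj => hw j (mem_insert_of_mem hj))).mp h0.symm i hi
      have hwa1' : w a = 1 := by rw [hW] at h0; linarith
      have hzero : ∑ i ∈ t, w i • z i = 0 :=
        Finset.sum_eq_zero fun i hi => by rw [hz0 i hi, zero_smul]
      rw [Finset.sum_insert ha, Finset.sum_insert ha, hzero, add_zero, hwa1', one_smul]
      constructor
      · exact hza
      · rw [Finset.sum_eq_zero fun i hi => by rw [hz0 i hi, zero_mul]]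
        ring
    · -- tail has positive weight W
      set W : ℝ := ∑ i ∈ t, w i with hWdef
      have hWpos : 0 < W := h0
      have hWne : W ≠ 0 := ne_of_gt hWpos
      obtain ⟨hymem, hyval⟩ := ih (fun i => w i / W) z
        (fun i hi => div_nonneg (hw i (mem_insert_of_mem hi)) hWpos.le)
        (by rw [← Finset.sum_div]; field_simp; rfl)
        (fun i hi => hz i (mem_insert_of_mem hi))
      set y : E := ∑ i ∈ t, (w i / W) • z i with hy
      have hsum : ∑ i ∈ insert a t, w i • z i = w a • z a + W • y := by
        rw [Finset.sum_insert ha, hy, Finset.smul_sum]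
        congr 1
        refine Finset.sum_congr rfl fun i hi => ?_
        rw [smul_smul]
        congr 1
        field_simp
      have hWeq : W = 1 - w a := hW
      constructor
      · rw [hsum]
        exact hS hza hymem hwa hWpos.le (by linarith)
      · rw [hsum, hWeq, he (z a) hza y hymem (w a) hwa hwa1, ← hWeq, hyval,
          Finset.mul_sum, Finset.sum_insert ha]
        congr 1
        refine Finset.sum_congr rfl fun i hi => ?_
        rw [← mul_assoc]
        congr 1
        field_simp


open Finset in
lemma affine_rel {E : Type*} [AddCommGroup E] [Module ℝ E] {S : Set E} (hS : Convex ℝ S)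
    {e : E → ℝ} (he : IsAffineOn S e) {s1 : E} (hs1 : s1 ∈ S)
    {ι : Type*} (t : Finset ι) (w : ι → ℝ) (z : ι → E) (hz : ∀ i ∈ t, z i ∈ S)
    (hsum : ∑ i ∈ t, w i • (z i - s1) = 0) :
    ∑ i ∈ t, w i * (e (z i) - e s1) = 0 := by
  classical
  set P : Finset ι := t.filter (fun i => 0 < w i) with hP
  set N : Finset ι := t.filter (fun i => ¬ 0 < w i) with hN
  have hPt : ∀ i ∈ P, i ∈ t := fun i hi => (Finset.mem_filter.mp hi).1
  have hNt : ∀ i ∈ N, i ∈ t := fun i hi => (Finset.mem_filter.mp hi).1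
  have hPpos : ∀ i ∈ P, 0 < w i := fun i hi => (Finset.mem_filter.mp hi).2
  have hNneg : ∀ i ∈ N, w i ≤ 0 := fun i hi => le_of_not_gt (Finset.mem_filter.mp hi).2
  set a : ℝ := ∑ i ∈ P, w i with ha
  set b : ℝ := ∑ i ∈ N, (-w i) with hb
  have hann : 0 ≤ a := Finset.sum_nonneg fun i hi => (hPpos i hi).le
  have hbnn : 0 ≤ b := Finset.sum_nonneg fun i hi => neg_nonneg.mpr (hNneg i hi)
  have hsplitw : ∀ f : ι → ℝ, ∑ i ∈ t, f i = ∑ i ∈ P, f i + ∑ i ∈ N, f i := fun f =>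
    (Finset.sum_filter_add_sum_filter_not t _ f).symm
  have hsplitv : ∀ f : ι → E, ∑ i ∈ t, f i = ∑ i ∈ P, f i + ∑ i ∈ N, f i := fun f =>
    (Finset.sum_filter_add_sum_filter_not t _ f).symm
  have hNw : ∑ i ∈ N, w i = -b := by
    rw [hb, Finset.sum_neg_distrib, neg_neg]
  have hns : ∑ i ∈ N, (-w i) • z i = -∑ i ∈ N, w i • z i := by
    rw [← Finset.sum_neg_distrib]
    exact Finset.sum_congr rfl fun i _ => neg_smul _ _
  -- rearranged vector identity
  have hkey : ∑ i ∈ P, w i • z i + b • s1 = ∑ i ∈ N, (-w i) • z i + a • s1 := by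
    have h0 : ∑ i ∈ t, w i • z i = (∑ i ∈ t, w i) • s1 := by
      have := hsum
      rw [Finset.sum_congr rfl (fun i _ => smul_sub (w i) (z i) s1),
        Finset.sum_sub_distrib, sub_eq_zero, ← Finset.sum_smul] at this
      exact this
    rw [hsplitv (fun i => w i • z i), hsplitw w, hNw, ← ha] at h0
    rw [hns]
    linear_combination (norm := module) h0
  rcases eq_or_lt_of_le (add_nonneg hann hbnn) with hM0 | hMpos
  · -- a + b = 0 hence all weights vanish
    have ha0 : a = 0 := by linarith
    have hb0 : b = 0 := by linarith
    have hw0 : ∀ i ∈ t, w i = 0 := by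
      intro i hi
      by_cases h : 0 < w i
      · exact absurd ((Finset.sum_eq_zero_iff_of_nonneg
          (fun j hj => (hPpos j hj).le)).mp ha0 i
          (Finset.mem_filter.mpr ⟨hi, h⟩)) (ne_of_gt h)
      · have := (Finset.sum_eq_zero_iff_of_nonneg
          (fun j hj => neg_nonneg.mpr (hNneg j hj))).mp hb0 i
          (Finset.mem_filter.mpr ⟨hi, h⟩)
        linarith [neg_eq_zero.mp this]
    exact Finset.sum_eq_zero fun i hi => by rw [hw0 i hi, zero_mul]
  · set M : ℝ := a + b with hM
    have hMne : M ≠ 0 := ne_of_gt hMpos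
    obtain ⟨hLmem, hLval⟩ := affine_comb hS he (insertNone P)
      (fun o => o.elim (b / M) (fun i => w i / M)) (fun o => o.elim s1 z)
      (by
        rw [Finset.forall_mem_insertNone]
        exact ⟨div_nonneg hbnn hMpos.le,
          fun i hi => div_nonneg (hPpos i hi).le hMpos.le⟩)
      (by rw [Finset.sum_insertNone]; simp only [Option.elim]
          rw [← Finset.sum_div, ← ha, ← add_div, add_comm b a, ← hM,
            div_self hMne])
      (by rw [Finset.forall_mem_insertNone]
          exact ⟨hs1, fun i hi => hz i (hPt i hi)⟩)
    obtain ⟨hRmem, hRval⟩ := affine_comb hS he (insertNone N)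
      (fun o => o.elim (a / M) (fun i => -w i / M)) (fun o => o.elim s1 z)
      (by
        rw [Finset.forall_mem_insertNone]
        exact ⟨div_nonneg hann hMpos.le,
          fun i hi => div_nonneg (neg_nonneg.mpr (hNneg i hi)) hMpos.le⟩)
      (by rw [Finset.sum_insertNone]; simp only [Option.elim]
          rw [← Finset.sum_div, ← hb, ← add_div, ← hM, div_self hMne])
      (by rw [Finset.forall_mem_insertNone]
          exact ⟨hs1, fun i hi => hz i (hNt i hi)⟩)
    -- the two combination points coincide
    have hMpt : M • (∑ o ∈ insertNone P,
          (o.elim (b / M) (fun i => w i / M)) • (o.elim s1 z : E))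
        = M • (∑ o ∈ insertNone N,
          (o.elim (a / M) (fun i => -w i / M)) • (o.elim s1 z : E)) := by
      rw [Finset.sum_insertNone, Finset.sum_insertNone]
      simp only [Option.elim]
      rw [smul_add, smul_add, Finset.smul_sum, Finset.smul_sum]
      have hsc : ∀ c : ℝ, M • ((c / M) • s1) = c • s1 := fun c => by
        rw [smul_smul]; congr 1; field_simp
      have hsc2 : ∀ (i : ι) (c : ℝ), M • ((c / M) • z i) = c • z i := fun i c => by
        rw [smul_smul]; congr 1; field_simp
      rw [hsc, hsc, Finset.sum_congr rfl (fun i _ => hsc2 i (w i)),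
        Finset.sum_congr rfl (fun i _ => hsc2 i (-w i))]
      linear_combination (norm := module) hkey
    have hpteq := smul_right_injective E hMne hMpt
    rw [hpteq, hRval] at hLval
    rw [Finset.sum_insertNone, Finset.sum_insertNone] at hLval
    simp only [Option.elim] at hLval
    -- hLval : a/M * e s1 + ∑_N (-w i/M)*e z i = b/M * e s1 + ∑_P (w i/M)*e z i
    have hNs : ∑ i ∈ N, (-w i / M) * e (z i) = (-(∑ i ∈ N, w i * e (z i))) / M := by
      rw [eq_div_iff hMne, Finset.sum_mul, ← Finset.sum_neg_distrib]
      exact Finset.sum_congr rfl fun i _ => by field_simp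
    have hPs : ∑ i ∈ P, (w i / M) * e (z i) = (∑ i ∈ P, w i * e (z i)) / M := by
      rw [eq_div_iff hMne, Finset.sum_mul]
      exact Finset.sum_congr rfl fun i _ => by field_simp
    rw [hNs, hPs] at hLval
    have hveq : a * e s1 - (∑ i ∈ N, w i * e (z i))
        = b * e s1 + ∑ i ∈ P, w i * e (z i) := by
      field_simp at hLval
      linarith [hLval]
    have hPsum : ∑ i ∈ P, w i * (e (z i) - e s1)
        = ∑ i ∈ P, w i * e (z i) - a * e s1 := by
      rw [ha, Finset.sum_mul, ← Finset.sum_sub_distrib]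
      exact Finset.sum_congr rfl fun i _ => by ring
    have hNsum : ∑ i ∈ N, w i * (e (z i) - e s1)
        = ∑ i ∈ N, w i * e (z i) + b * e s1 := by
      have : -b * e s1 = ∑ i ∈ N, w i * e s1 := by rw [← Finset.sum_mul, hNw]
      rw [Finset.sum_congr rfl (fun i (_ : i ∈ N) =>
        (mul_sub (w i) (e (z i)) (e s1) : w i * (e (z i) - e s1) = _)),
        Finset.sum_sub_distrib, ← this]
      ring
    rw [hsplitw (fun i => w i * (e (z i) - e s1)), hPsum, hNsum]
    linarith [hveq]


lemma exists_linear_rep {X : Type*} [AddCommGroup X] [Module ℝ X] {S : Set X}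
    (hS : Convex ℝ S) {e : X → ℝ} (he : IsAffineOn S e) {s1 : X} (hs1 : s1 ∈ S) :
    ∃ (f : X →ₗ[ℝ] ℝ) (c : ℝ), ∀ s ∈ S, e s = f s + c := by
  classical
  set v : S → X := fun s => (s : X) - s1 with hv
  set u : S → ℝ := fun s => e s - e s1 with hu
  set Φ : (S →₀ ℝ) →ₗ[ℝ] X := Finsupp.linearCombination ℝ v with hΦ
  set Ψ : (S →₀ ℝ) →ₗ[ℝ] ℝ := Finsupp.linearCombination ℝ u with hΨ
  have hker : LinearMap.ker Φ ≤ LinearMap.ker Ψ := by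
    intro μ hμ
    rw [LinearMap.mem_ker] at hμ ⊢
    have hμ' : ∑ i ∈ μ.support, μ i • ((i : X) - s1) = 0 := by
      rwa [hΦ, Finsupp.linearCombination_apply, Finsupp.sum] at hμ
    have hrel := affine_rel hS he hs1 μ.support μ (fun i : S => (i : X))
      (fun i _ => i.2) hμ'
    rw [hΨ, Finsupp.linearCombination_apply, Finsupp.sum]
    simpa [hu, smul_eq_mul] using hrel
  set g : LinearMap.range Φ →ₗ[ℝ] ℝ :=
    ((LinearMap.ker Φ).liftQ Ψ hker).comp Φ.quotKerEquivRange.symm.toLinearMap with hgdef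
  have hg : ∀ μ : (S →₀ ℝ), g ⟨Φ μ, LinearMap.mem_range_self Φ μ⟩ = Ψ μ := by
    intro μ
    have h1 : Φ.quotKerEquivRange (Submodule.Quotient.mk μ)
        = ⟨Φ μ, LinearMap.mem_range_self Φ μ⟩ :=
      Subtype.ext (Φ.quotKerEquivRange_apply_mk μ)
    have h2 : Φ.quotKerEquivRange.symm ⟨Φ μ, LinearMap.mem_range_self Φ μ⟩
        = Submodule.Quotient.mk μ := by
      rw [← h1, LinearEquiv.symm_apply_apply]
    rw [hgdef, LinearMap.comp_apply, LinearEquiv.coe_toLinearMap, h2,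
      Submodule.liftQ_apply]
  obtain ⟨f0, hf0⟩ := g.exists_extend
  refine ⟨f0, e s1 - f0 s1, ?_⟩
  intro s hs
  have hmem : s - s1 ∈ LinearMap.range Φ :=
    ⟨Finsupp.single ⟨s, hs⟩ 1, by
      rw [hΦ, Finsupp.linearCombination_single, one_smul]⟩
  have h3 : f0 (s - s1) = g ⟨s - s1, hmem⟩ := LinearMap.congr_fun hf0 ⟨s - s1, hmem⟩
  have h5 : (⟨s - s1, hmem⟩ : LinearMap.range Φ)
      = ⟨Φ (Finsupp.single ⟨s, hs⟩ 1), LinearMap.mem_range_self _ _⟩ :=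
    Subtype.ext (by
      show s - s1 = Φ (Finsupp.single ⟨s, hs⟩ 1)
      rw [hΦ, Finsupp.linearCombination_single, one_smul])
  have h4 : g ⟨s - s1, hmem⟩ = e s - e s1 := by
    rw [h5, hg, hΨ, Finsupp.linearCombination_single, one_smul]
  rw [map_sub] at h3
  have := h3.trans h4
  linarith


/-- Non-generic criterion: if `p1 > p2 > 0`, `p1 + p2 = 1` and
`s* = (p1 • s1 − p2 • s2)/(p1 − p2)` lies in `S̃ = cl(S)`, then every two-valued
observable `(1 − e, e)` has success probability `p1(1 − e s1) + p2 e s2 ≤ p1`; the bound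
`p1 = max(p1, p2)` is attained, i.e. the case is non-generic. -/
theorem nongeneric_of_sstar_mem {X : Type*} [AddCommGroup X] [Module ℝ X]
    [TopologicalSpace X] [IsTopologicalAddGroup X] [ContinuousSMul ℝ X]
    [LocallyConvexSpace ℝ X] [T2Space X]
    (S Stilde : Set X) (hS : Convex ℝ S) (hSt : Convex ℝ Stilde)
    (hcomp : IsCompact Stilde) (hcl : closure S = Stilde)
    (V : Submodule ℝ X) (hSV : S ⊆ (V : Set X)) (hVdense : Dense (V : Set X))
    (hVcont : ∀ f : V →ₗ[ℝ] ℝ,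
      Bornology.IsBounded (f '' (((↑) : V → X) ⁻¹' S)) → Continuous f)
    (s1 s2 : X) (hs1 : s1 ∈ S) (hs2 : s2 ∈ S) (hne : s1 ≠ s2)
    (p1 p2 : ℝ) (h21 : p2 < p1) (hp2 : 0 < p2) (hpsum : p1 + p2 = 1)
    (hstar : (p1 - p2)⁻¹ • (p1 • s1 - p2 • s2) ∈ Stilde) :
    (∀ e : X → ℝ, IsAffineOn S e → (∀ x ∈ S, e x ∈ Set.Icc (0 : ℝ) 1) →
      p1 * (1 - e s1) + p2 * e s2 ≤ p1) ∧
    (∃ e : X → ℝ, IsAffineOn S e ∧ (∀ x ∈ S, e x ∈ Set.Icc (0 : ℝ) 1) ∧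
      p1 * (1 - e s1) + p2 * e s2 = p1) := by
  have hp1 : 0 < p1 := hp2.trans h21
  have hpd : (0:ℝ) < p1 - p2 := by linarith
  constructor
  · intro e he hr
    obtain ⟨f0, c, hrep⟩ := exists_linear_rep hS he hs1
    set f : V →ₗ[ℝ] ℝ := f0.domRestrict V with hfdef
    have hbd : Bornology.IsBounded (f '' (((↑) : V → X) ⁻¹' S)) := by
      apply (Metric.isBounded_Icc (0 - c) (1 - c)).subset
      rintro x ⟨v, hv, rfl⟩
      have h1 := (hr _ hv)
      rw [Set.mem_Icc] at h1
      have h2 := hrep _ hv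
      have h3 : f v = f0 (v : X) := rfl
      rw [Set.mem_Icc, h3]
      constructor <;> linarith
    have hfc : Continuous f := hVcont f hbd
    letI : UniformSpace X := IsTopologicalAddGroup.rightUniformSpace X
    haveI : IsUniformAddGroup X := isUniformAddGroup_of_addCommGroup
    have ue : IsUniformEmbedding ((↑) : V → X) := isUniformEmbedding_subtype_val
    have dr : DenseRange ((↑) : V → X) := by
      rw [DenseRange, Subtype.range_coe]; exact hVdense
    haveI : IsUniformAddGroup V :=
      ue.isUniformInducing.isUniformAddGroup (V.toAddSubgroup.subtype)
    have hfu : UniformContinuous f :=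
      uniformContinuous_of_continuousAt_zero f hfc.continuousAt
    set F : X → ℝ := (ue.isUniformInducing.isDenseInducing dr).extend f with hFdef
    have hFc : Continuous F :=
      (uniformContinuous_uniformly_extend ue.isUniformInducing dr hfu).continuous
    have hFe : ∀ v : V, F ↑v = f v := fun v =>
      uniformly_extend_of_ind ue.isUniformInducing dr hfu v
    have hEeq : ∀ s ∈ S, F s + c = e s := by
      intro s hs
      have h1 := hFe ⟨s, hSV hs⟩
      have h2 := hrep s hs
      have h3 : f ⟨s, hSV hs⟩ = f0 s := rfl
      rw [h1, h3]
      linarith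
    set sstar : X := (p1 - p2)⁻¹ • (p1 • s1 - p2 • s2) with hsstar
    have hstcl : sstar ∈ closure S := by rw [hcl]; exact hstar
    set l : ℝ := p2 / p1 with hl
    have hl0 : 0 ≤ l := div_nonneg hp2.le hp1.le
    have hl1 : l < 1 := (div_lt_one hp1).mpr h21
    have hid : l • s2 + (1 - l) • sstar = s1 := by
      rw [hsstar, hl]
      match_scalars <;> (field_simp; try ring)
    set L := nhdsWithin sstar S with hL
    haveI hLne : L.NeBot := mem_closure_iff_nhdsWithin_neBot.mp hstcl
    set φ : X → X := fun x => l • s2 + (1 - l) • x with hφ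
    have hφc : Continuous φ := continuous_const.add (continuous_id.const_smul (1 - l))
    have htφ : Filter.Tendsto φ L (nhds s1) := by
      have h1 : Filter.Tendsto φ (nhds sstar) (nhds (φ sstar)) := hφc.tendsto sstar
      have h2 : φ sstar = s1 := hid
      rw [h2] at h1
      exact h1.mono_left nhdsWithin_le_nhds
    have hT1 : Filter.Tendsto (fun x => F (φ x) + c) L (nhds (e s1)) := by
      have h1 : Filter.Tendsto (fun x => F (φ x)) L (nhds (F s1)) :=
        (hFc.tendsto s1).comp htφ
      have h2 := h1.add_const c
      rwa [hEeq s1 hs1] at h2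
    have hT2 : Filter.Tendsto (fun x => F x + c) L (nhds (F sstar + c)) :=
      ((hFc.tendsto sstar).mono_left nhdsWithin_le_nhds).add_const c
    have hT3 : Filter.Tendsto (fun x => l * e s2 + (1 - l) * (F x + c)) L
        (nhds (l * e s2 + (1 - l) * (F sstar + c))) :=
      (hT2.const_mul (1 - l)).const_add (l * e s2)
    have hev : (fun x => F (φ x) + c) =ᶠ[L] fun x => l * e s2 + (1 - l) * (F x + c) := by
      filter_upwards [self_mem_nhdsWithin] with x hx
      have hφx : φ x ∈ S := hS hs2 hx hl0 (by linarith) (by ring)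
      calc F (φ x) + c = e (φ x) := hEeq _ hφx
        _ = l * e s2 + (1 - l) * e x := he s2 hs2 x hx l hl0 hl1.le
        _ = l * e s2 + (1 - l) * (F x + c) := by rw [hEeq x hx]
    have hlim : e s1 = l * e s2 + (1 - l) * (F sstar + c) :=
      tendsto_nhds_unique (hT1.congr' hev) hT3
    have hFs0 : 0 ≤ F sstar + c := by
      refine ge_of_tendsto hT2 ?_
      filter_upwards [self_mem_nhdsWithin] with x hx
      have h1 := (hr x hx).1
      rw [hEeq x hx]
      exact h1
    have hes2 : 0 ≤ e s2 := (hr s2 hs2).1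
    have hpl : p1 * l = p2 := by rw [hl]; field_simp
    have key : p2 * e s2 ≤ p1 * e s1 := by
      have h6 : p1 * e s1 = p1 * l * e s2 + p1 * ((1 - l) * (F sstar + c)) := by
        rw [hlim]; ring
      have h7 : 0 ≤ p1 * ((1 - l) * (F sstar + c)) :=
        mul_nonneg hp1.le (mul_nonneg (by linarith) hFs0)
      rw [hpl] at h6
      linarith
    linarith
  · refine ⟨fun _ => 0, ?_, ?_, by ring⟩
    · intro x _ y _ l _ _
      simp
    · intro x _
      simp [Set.mem_Icc]
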